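/- Let d, m be positive integers, λ > 0 and R ≥ 0. Let φ₁, …, φ_m ∈ ℝ^d satisfy ‖φ_i‖₂ ≤ 1 for all i, and let r₁, …, r_m ∈ ℝ satisfy |r_i| ≤ R for all i. Define Σ = λ·I_d + Σ_{i=1}^{m} φ_i φ_iᵀ and w = Σ^{−1} Σ_{i=1}^{m} φ_i r_i. Then ‖w‖₂² ≤ m R² d / λ. -/

import Mathlib

open Matrix Finset

/-- Norm bound on the ridge regression weight vector: if `‖φ_i‖₂ ≤ 1` and `|r_i| ≤ R`,
then the ridge estimate `w = Σ⁻¹ ∑ φ_i r_i` with `Σ = λ I + ∑ φ_i φ_iᵀ` satisfies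
`‖w‖₂² ≤ m R² d / λ`. -/
theorem ridge_weight_norm_bound
    (d m : ℕ) (hd : 0 < d) (hm : 0 < m)
    (lam R : ℝ) (hlam : 0 < lam) (hR : 0 ≤ R)
    (φ : Fin m → Fin d → ℝ) (hφ : ∀ i, Real.sqrt (φ i ⬝ᵥ φ i) ≤ 1)
    (r : Fin m → ℝ) (hr : ∀ i, |r i| ≤ R)
    (Sig : Matrix (Fin d) (Fin d) ℝ)
    (hSig : Sig = lam • (1 : Matrix (Fin d) (Fin d) ℝ)
        + ∑ i : Fin m, Matrix.vecMulVec (φ i) (φ i))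
    (w : Fin d → ℝ)
    (hw : w = (Sig⁻¹).mulVec (∑ i : Fin m, r i • φ i)) :
    w ⬝ᵥ w ≤ m * R ^ 2 * d / lam := by
  have hmv : ∀ x : Fin d → ℝ,
      Sig.mulVec x = lam • x + ∑ i : Fin m, (φ i ⬝ᵥ x) • φ i := by
    intro x
    rw [hSig]
    funext j
    simp only [Matrix.mulVec, dotProduct, Matrix.add_apply, Matrix.smul_apply,
      Matrix.one_apply, Matrix.sum_apply, Matrix.vecMulVec_apply, Pi.add_apply, Pi.smul_apply,
      smul_eq_mul, add_mul, Finset.sum_add_distrib, Finset.sum_mul, mul_ite, ite_mul,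
      mul_one, mul_zero, zero_mul, Finset.sum_ite_eq, Finset.mem_univ, if_true]
    congr 1
    simp only [Finset.sum_apply, Pi.smul_apply, smul_eq_mul]
    rw [show (∑ k : Fin d, ∑ i : Fin m, φ i j * φ i k * x k)
        = ∑ i : Fin m, ∑ k : Fin d, φ i j * φ i k * x k from Finset.sum_comm]
    refine Finset.sum_congr rfl fun i _ => ?_
    rw [Finset.sum_mul]
    exact Finset.sum_congr rfl fun k _ => by ring
  have hquad : ∀ x : Fin d → ℝ,
      x ⬝ᵥ Sig.mulVec x = lam * (x ⬝ᵥ x) + ∑ i : Fin m, (φ i ⬝ᵥ x) ^ 2 := by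
    intro x
    rw [hmv x]
    simp only [dotProduct, Pi.add_apply, Pi.smul_apply, Finset.sum_apply,
      smul_eq_mul, mul_add, Finset.sum_add_distrib, Finset.mul_sum, Finset.sum_mul, sq]
    congr 1
    · exact Finset.sum_congr rfl fun k _ => by ring
    · rw [show (∑ k : Fin d, ∑ i : Fin m, ∑ l : Fin d, x k * (φ i l * x l * φ i k))
          = ∑ i : Fin m, ∑ k : Fin d, ∑ l : Fin d, x k * (φ i l * x l * φ i k)
          from Finset.sum_comm]
      refine Finset.sum_congr rfl fun i _ => ?_
      rw [show (∑ k : Fin d, ∑ l : Fin d, x k * (φ i l * x l * φ i k))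
          = ∑ l : Fin d, ∑ k : Fin d, x k * (φ i l * x l * φ i k) from Finset.sum_comm]
      exact Finset.sum_congr rfl fun l _ => Finset.sum_congr rfl fun k _ => by ring
  have hherm : Sig.IsHermitian := by
    rw [hSig]
    ext i j
    simp [Matrix.conjTranspose_apply, Matrix.add_apply, Matrix.smul_apply,
      Matrix.one_apply, Matrix.sum_apply, Matrix.vecMulVec_apply, mul_comm, eq_comm]
  have hpos : Sig.PosDef := by
    refine Matrix.posDef_iff_dotProduct_mulVec.mpr ⟨hherm, fun x hx => ?_⟩
    have hsx : (star x : Fin d → ℝ) = x := by simp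
    rw [hsx, hquad x]
    have h1 : 0 < lam * (x ⬝ᵥ x) := by
      apply mul_pos hlam
      have hdp : x ⬝ᵥ x = ∑ j, x j ^ 2 := by simp [dotProduct, sq]
      rw [hdp]
      rcases Function.ne_iff.mp hx with ⟨j, hj⟩
      refine Finset.sum_pos' (fun j _ => sq_nonneg _) ⟨j, Finset.mem_univ j, ?_⟩
      simpa using sq_pos_of_ne_zero hj
    have h2 : (0:ℝ) ≤ ∑ i : Fin m, (φ i ⬝ᵥ x) ^ 2 :=
      Finset.sum_nonneg fun i _ => sq_nonneg _
    linarith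
  -- Sig *ᵥ w equals the right-hand side b
  have hSw : Sig.mulVec w = ∑ i : Fin m, r i • φ i := by
    rw [hw, Matrix.mulVec_mulVec, Matrix.mul_nonsing_inv _ hpos.det_pos.ne'.isUnit,
      Matrix.one_mulVec]
  have hdotb : w ⬝ᵥ (∑ i : Fin m, r i • φ i) = ∑ i : Fin m, r i * (φ i ⬝ᵥ w) := by
    rw [dotProduct_comm]
    simp only [dotProduct, Finset.sum_apply, Pi.smul_apply, smul_eq_mul,
      Finset.sum_mul, Finset.mul_sum]
    rw [show (∑ k : Fin d, ∑ i : Fin m, r i * φ i k * w k)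
        = ∑ i : Fin m, ∑ k : Fin d, r i * φ i k * w k from Finset.sum_comm]
    exact Finset.sum_congr rfl fun i _ => Finset.sum_congr rfl fun k _ => by ring
  have hkey : lam * (w ⬝ᵥ w) + ∑ i : Fin m, (φ i ⬝ᵥ w) ^ 2
      = ∑ i : Fin m, r i * (φ i ⬝ᵥ w) := by
    have h := hquad w
    rw [hSw, hdotb] at h
    linarith
  set S : ℝ := ∑ i : Fin m, (φ i ⬝ᵥ w) ^ 2 with hS
  have hSnn : 0 ≤ S := Finset.sum_nonneg fun i _ => sq_nonneg _
  have habs : ∑ i : Fin m, r i * (φ i ⬝ᵥ w) ≤ R * ∑ i : Fin m, |φ i ⬝ᵥ w| := by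
    rw [Finset.mul_sum]
    refine Finset.sum_le_sum fun i _ => ?_
    calc r i * (φ i ⬝ᵥ w) ≤ |r i * (φ i ⬝ᵥ w)| := le_abs_self _
      _ = |r i| * |φ i ⬝ᵥ w| := abs_mul _ _
      _ ≤ R * |φ i ⬝ᵥ w| := mul_le_mul_of_nonneg_right (hr i) (abs_nonneg _)
  have hcs : (∑ i : Fin m, |φ i ⬝ᵥ w|) ^ 2 ≤ m * S := by
    have h := sq_sum_le_card_mul_sum_sq (s := Finset.univ) (f := fun i : Fin m => |φ i ⬝ᵥ w|)
    simpa [hS, sq_abs] using h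
  set t : ℝ := Real.sqrt (↑m * S) with ht
  have htnn : 0 ≤ t := Real.sqrt_nonneg _
  have ht2 : t ^ 2 = ↑m * S := Real.sq_sqrt (by positivity)
  have hsum_nn : 0 ≤ ∑ i : Fin m, |φ i ⬝ᵥ w| := Finset.sum_nonneg fun i _ => abs_nonneg _
  have hsum_le : ∑ i : Fin m, |φ i ⬝ᵥ w| ≤ t := by
    nlinarith [hcs, ht2, htnn, hsum_nn]
  have hmain : lam * (w ⬝ᵥ w) + S ≤ R * t := by
    rw [hkey]
    exact le_trans habs (mul_le_mul_of_nonneg_left hsum_le hR)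
  have hwnn : 0 ≤ w ⬝ᵥ w := by
    have hdp : w ⬝ᵥ w = ∑ j, w j ^ 2 := by simp [dotProduct, sq]
    rw [hdp]; exact Finset.sum_nonneg fun j _ => sq_nonneg _
  have hm1 : (1:ℝ) ≤ ↑m := by exact_mod_cast hm
  have hbound : lam * (w ⬝ᵥ w) ≤ ↑m * R ^ 2 := by
    nlinarith [sq_nonneg (2 * t - ↑m * R), hmain, ht2, hSnn, hwnn,
      mul_nonneg hlam.le hwnn]
  have hd1 : (1:ℝ) ≤ ↑d := by exact_mod_cast hd
  have hnum : (↑m:ℝ) * R ^ 2 ≤ ↑m * R ^ 2 * ↑d := by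
    have h0 : (0:ℝ) ≤ ↑m * R ^ 2 := by positivity
    have h1 := mul_le_mul_of_nonneg_left hd1 h0
    linarith [h1]
  calc w ⬝ᵥ w ≤ ↑m * R ^ 2 / lam := by
        rw [le_div_iff₀ hlam]; linarith [hbound]
    _ ≤ ↑m * R ^ 2 * ↑d / lam := by rw [div_le_div_iff₀ hlam hlam]; nlinarith [hnum, hlam]
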